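/- Let L_3 = U^{⊕3} ⊕ E8(-1)^{⊕2} ⊕ ⟨-4⟩ and let D ∈ L_3 be a primitive vector with D² < 0 such that the dual class r = D/div(D) ∈ L_3 ⊗ ℚ satisfies r² ≥ -3. Then the pair (D², div(D)) belongs to the set {(-12, 2), (-36, 4), (-2, 1), (-4, 4), (-4, 2)}. -/

import Mathlib

open Matrix

/-- Gram matrix of the hyperbolic plane `U`. -/
def U2 : Matrix (Fin 2) (Fin 2) ℤ := !![0, 1; 1, 0]

/-- Gram matrix of the negative definite `E8(-1)` lattice. -/
def E8neg : Matrix (Fin 8) (Fin 8) ℤ :=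
  !![-2, 1, 0, 0, 0, 0, 0, 0;
      1,-2, 1, 0, 0, 0, 0, 0;
      0, 1,-2, 1, 0, 0, 0, 0;
      0, 0, 1,-2, 1, 0, 0, 0;
      0, 0, 0, 1,-2, 1, 0, 1;
      0, 0, 0, 0, 1,-2, 1, 0;
      0, 0, 0, 0, 0, 1,-2, 0;
      0, 0, 0, 0, 1, 0, 0,-2]

/-- Index type of the unimodular summand `U^3 ⊕ E8(-1)^2`. -/
abbrev KIdx := (Fin 2 ⊕ (Fin 2 ⊕ Fin 2)) ⊕ (Fin 8 ⊕ Fin 8)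

/-- Gram matrix of `U^3 ⊕ E8(-1)^2`. -/
def GramK : Matrix KIdx KIdx ℤ :=
  Matrix.fromBlocks
    (Matrix.fromBlocks U2 0 0 (Matrix.fromBlocks U2 0 0 U2)) 0 0
    (Matrix.fromBlocks E8neg 0 0 E8neg)

/-- Index type of `L_n = U^3 ⊕ E8(-1)^2 ⊕ ⟨-(2n-2)⟩`. -/
abbrev LIdx := KIdx ⊕ Fin 1

/-- Gram matrix of `L_n = U^3 ⊕ E8(-1)^2 ⊕ ⟨-(2n-2)⟩`. -/
def GramL (n : ℕ) : Matrix LIdx LIdx ℤ :=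
  Matrix.fromBlocks GramK 0 0 !![-(2 * (n : ℤ) - 2)]

/-- The bilinear form of `L_n`. -/
def bil (n : ℕ) (v w : LIdx → ℤ) : ℤ := v ⬝ᵥ ((GramL n).mulVec w)

/-- The `ℚ`-bilinear extension of the form of `L_n` to `L_n ⊗ ℚ`. -/
def bilQ (n : ℕ) (v w : LIdx → ℚ) : ℚ :=
  v ⬝ᵥ (((GramL n).map (Int.cast : ℤ → ℚ)).mulVec w)

/-- The inclusion `L_n ↪ L_n ⊗ ℚ`. -/
def toQ (v : LIdx → ℤ) : LIdx → ℚ := fun i => (v i : ℚ)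

/-- The generator `δ` of the summand `⟨-(2n-2)⟩`. -/
def deltaVec : LIdx → ℤ := fun i => if i = Sum.inr 0 then 1 else 0

/-- A lattice vector is primitive if it is not a nontrivial multiple of
another lattice vector. -/
def IsPrimitive (v : LIdx → ℤ) : Prop :=
  ∀ (k : ℤ) (w : LIdx → ℤ), v = k • w → IsUnit k

/-- `HasDiv n v m` says that `div(v) = m`, i.e. `(v, L_n) = mℤ`. -/
def HasDiv (n : ℕ) (v : LIdx → ℤ) (m : ℤ) : Prop :=
  Ideal.span (Set.range fun w => bil n v w) = Ideal.span {m}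

/-- Integer inverse of `E8neg`. -/
def E8inv : Matrix (Fin 8) (Fin 8) ℤ :=
  !![-2,-3,-4,-5,-6,-4,-2,-3;
     -3,-6,-8,-10,-12,-8,-4,-6;
     -4,-8,-12,-15,-18,-12,-6,-9;
     -5,-10,-15,-20,-24,-16,-8,-12;
     -6,-12,-18,-24,-30,-20,-10,-15;
     -4,-8,-12,-16,-20,-14,-7,-10;
     -2,-4,-6,-8,-10,-7,-4,-5;
     -3,-6,-9,-12,-15,-10,-5,-8]

lemma E8inv_mul : E8inv * E8neg = 1 := by decide

lemma U2_mul : U2 * U2 = 1 := by decide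

/-- Integer inverse of `GramK`. -/
def KInv : Matrix KIdx KIdx ℤ :=
  Matrix.fromBlocks
    (Matrix.fromBlocks U2 0 0 (Matrix.fromBlocks U2 0 0 U2)) 0 0
    (Matrix.fromBlocks E8inv 0 0 E8inv)

lemma KInv_mul : KInv * GramK = 1 := by
  simp [KInv, GramK, Matrix.fromBlocks_multiply, U2_mul, E8inv_mul, Matrix.fromBlocks_one]

lemma even_quad {ι : Type*} [Fintype ι] [DecidableEq ι] (G : Matrix ι ι ℤ)
    (hsym : ∀ i j, G i j = G j i) (hdiag : ∀ i, Even (G i i)) (x : ι → ℤ) :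
    Even (x ⬝ᵥ G.mulVec x) := by
  rw [even_iff_two_dvd]
  have h2 : ((2 : ℕ) : ℤ) ∣ x ⬝ᵥ G *ᵥ x := by
    rw [← ZMod.intCast_zmod_eq_zero_iff_dvd]
    have expand : x ⬝ᵥ G *ᵥ x = ∑ p : ι × ι, x p.1 * G p.1 p.2 * x p.2 := by
      rw [← Finset.univ_product_univ, Finset.sum_product]
      simp [dotProduct, mulVec, Finset.mul_sum, mul_assoc]
    rw [expand]
    push_cast
    set f : ι × ι → ZMod 2 := fun p => (x p.1 : ZMod 2) * (G p.1 p.2 : ZMod 2) * (x p.2 : ZMod 2) with hf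
    rw [← Finset.sum_filter_add_sum_filter_not Finset.univ (fun p : ι × ι => p.1 = p.2) f]
    have hdzero : ∑ p ∈ Finset.filter (fun p : ι × ι => p.1 = p.2) Finset.univ, f p = 0 := by
      apply Finset.sum_eq_zero
      intro p hp
      have hps : p.1 = p.2 := (Finset.mem_filter.1 hp).2
      have hz : ((G p.1 p.2 : ℤ) : ZMod 2) = 0 := by
        rw [ZMod.intCast_zmod_eq_zero_iff_dvd, hps]
        exact_mod_cast (hdiag p.2).two_dvd
      simp [hf, hz]
    have hodzero : ∑ p ∈ Finset.filter (fun p : ι × ι => ¬ p.1 = p.2) Finset.univ, f p = 0 := by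
      apply Finset.sum_involution (fun p _ => (p.2, p.1))
      · intro a ha
        have he : f (a.2, a.1) = f a := by
          simp only [hf]
          rw [hsym a.2 a.1]; ring
        rw [he, CharTwo.add_self_eq_zero]
      · intro a ha _
        have hne : ¬ a.1 = a.2 := (Finset.mem_filter.1 ha).2
        exact fun h => hne (congrArg Prod.fst h).symm
      · intro a ha
        simp only [Finset.mem_filter, Finset.mem_univ, true_and] at ha ⊢
        exact fun h => ha h.symm
      · intro a ha
        rfl
    rw [hdzero, hodzero, add_zero]
  exact_mod_cast h2

lemma gramL3_symm : ∀ i j, GramL 3 i j = GramL 3 j i := by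
  have h : (GramL 3)ᵀ = GramL 3 := by decide
  exact fun i j => congrFun (congrFun h j) i

lemma gramL3_transpose : (GramL 3)ᵀ = GramL 3 := by decide

lemma gramL3_even_diag : ∀ i : LIdx, Even (GramL 3 i i) := by decide

lemma bil_comm (a b : LIdx → ℤ) : bil 3 a b = bil 3 b a := by
  unfold bil
  rw [Matrix.dotProduct_mulVec, ← gramL3_transpose, Matrix.vecMul_transpose,
    dotProduct_comm, gramL3_transpose]

lemma gramL3_eq : GramL 3 = Matrix.fromBlocks GramK 0 0 !![-4] := by
  unfold GramL; norm_num

lemma elim_decomp (v : LIdx → ℤ) :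
    v = Sum.elim (fun k => v (Sum.inl k)) (fun j => v (Sum.inr j)) := by
  funext i; cases i <;> rfl

lemma mulVec_L3 (v : LIdx → ℤ) :
    (GramL 3).mulVec v =
      Sum.elim (GramK.mulVec fun k => v (Sum.inl k)) (fun _ => -4 * v (Sum.inr 0)) := by
  rw [gramL3_eq]
  conv_lhs => rw [elim_decomp v]
  rw [Matrix.fromBlocks_mulVec]
  funext i
  cases i with
  | inl k => simp [Matrix.mulVec]
  | inr j =>
    have : j = 0 := Subsingleton.elim _ _
    subst this
    simp [Matrix.mulVec, dotProduct, Fin.sum_univ_succ, Matrix.vecHead, Matrix.vecTail]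

lemma bil_delta (v : LIdx → ℤ) : bil 3 v deltaVec = -4 * v (Sum.inr 0) := by
  unfold bil
  rw [mulVec_L3]
  have hdd : (fun k : KIdx => deltaVec (Sum.inl k)) = (0 : KIdx → ℤ) := by
    funext k; simp [deltaVec]
  rw [hdd, Matrix.mulVec_zero]
  have hdr : deltaVec (Sum.inr 0) = 1 := by simp [deltaVec]
  rw [hdr, dotProduct, Fintype.sum_sum_type]
  simp [Fin.sum_univ_succ]
  ring

/-- in `L_3`, a primitive vector `D` with `D² < 0` whose dual class
`r = D/div(D)` satisfies `r² ≥ -3` has `(D², div(D))` in the given list. -/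
theorem stmt_7 (D : LIdx → ℤ) (hprim : IsPrimitive D) (m : ℤ) (hm : 0 < m)
    (hdiv : HasDiv 3 D m) (hneg : bil 3 D D < 0)
    (hr : (-3 : ℚ) ≤ (bil 3 D D : ℚ) / (m : ℚ) ^ 2) :
    (bil 3 D D = -12 ∧ m = 2) ∨ (bil 3 D D = -36 ∧ m = 4) ∨
    (bil 3 D D = -2 ∧ m = 1) ∨ (bil 3 D D = -4 ∧ m = 4) ∨
    (bil 3 D D = -4 ∧ m = 2) := by
  -- every pairing with D is divisible by m
  have hdvd : ∀ w : LIdx → ℤ, m ∣ bil 3 D w := by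
    intro w
    have hmem : bil 3 D w ∈ Ideal.span ({m} : Set ℤ) := by
      rw [← hdiv]
      exact Ideal.subset_span ⟨w, rfl⟩
    exact Ideal.mem_span_singleton.1 hmem
  have hc : ∀ i, m ∣ (GramL 3).mulVec D i := by
    intro i
    have h1 := hdvd (Pi.single i 1)
    have e : bil 3 D (Pi.single i 1) = (GramL 3).mulVec D i := by
      unfold bil
      rw [Matrix.mulVec_single_one]
      rw [dotProduct, Matrix.mulVec, dotProduct]
      exact Finset.sum_congr rfl fun j _ => by rw [gramL3_symm i j, Matrix.col_apply]; ring
    rwa [e] at h1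
  set DK : KIdx → ℤ := fun k => D (Sum.inl k) with hDK_def
  set u : ℤ := D (Sum.inr 0) with hu_def
  have hmv := mulVec_L3 D
  have hcK : ∀ k : KIdx, m ∣ GramK.mulVec DK k := by
    intro k
    have := hc (Sum.inl k)
    rwa [hmv] at this
  have hc4u : m ∣ 4 * u := by
    have h0 := hc (Sum.inr 0)
    rw [hmv] at h0
    simp only [Sum.elim_inr] at h0
    have := dvd_neg.2 h0
    rw [neg_mul, neg_neg] at this
    exact this
  -- m divides every K-coordinate of D
  have hDKdvd : ∀ k : KIdx, m ∣ DK k := by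
    intro k
    have hre : DK = KInv.mulVec (GramK.mulVec DK) := by
      rw [Matrix.mulVec_mulVec, KInv_mul, Matrix.one_mulVec]
    rw [hre]
    unfold Matrix.mulVec dotProduct
    exact Finset.dvd_sum fun i _ => Dvd.dvd.mul_left (hcK i) _
  -- m and u are coprime
  have hDdvd : ∀ i, (Int.gcd m u : ℤ) ∣ D i := by
    intro i
    cases i with
    | inl k => exact dvd_trans (Int.gcd_dvd_left m u) (hDKdvd k)
    | inr j =>
      have : j = 0 := Subsingleton.elim _ _
      subst this
      exact Int.gcd_dvd_right m u
  have hgcd : Int.gcd m u = 1 := by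
    have hunit : IsUnit ((Int.gcd m u : ℤ)) := by
      apply hprim ((Int.gcd m u : ℤ)) (fun i => D i / (Int.gcd m u : ℤ))
      funext i
      simp only [Pi.smul_apply, smul_eq_mul]
      exact (Int.mul_ediv_cancel' (hDdvd i)).symm
    have := Int.isUnit_iff.1 hunit
    omega
  -- m divides 4
  have hm4 : m ∣ 4 := by
    have hcop : IsCoprime m u := Int.isCoprime_iff_gcd_eq_one.2 hgcd
    exact hcop.dvd_of_dvd_mul_right hc4u
  -- decompose D = m • w + u • deltaVec
  set w : LIdx → ℤ := Sum.elim (fun k => DK k / m) (fun _ => 0) with hw_def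
  have hdecomp : D = m • w + u • deltaVec := by
    funext i
    cases i with
    | inl k =>
      simp only [Pi.add_apply, Pi.smul_apply, smul_eq_mul, hw_def, Sum.elim_inl, deltaVec]
      rw [Int.mul_ediv_cancel' (hDKdvd k)]
      simp [hDK_def]
    | inr j =>
      have : j = 0 := Subsingleton.elim _ _
      subst this
      simp only [Pi.add_apply, Pi.smul_apply, smul_eq_mul, hw_def, Sum.elim_inr, deltaVec]
      simp [hu_def]
  have hwdelta : bil 3 w deltaVec = 0 := by
    rw [bil_delta]
    simp [hw_def]
  have hdd : bil 3 deltaVec deltaVec = -4 := by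
    rw [bil_delta]
    simp [deltaVec]
  have hexpand : bil 3 D D = m^2 * bil 3 w w - 4 * u^2 := by
    conv_lhs => rw [hdecomp]
    unfold bil
    rw [Matrix.mulVec_add, Matrix.mulVec_smul, Matrix.mulVec_smul,
      dotProduct_add, add_dotProduct, add_dotProduct,
      smul_dotProduct, smul_dotProduct, smul_dotProduct, smul_dotProduct,
      dotProduct_smul, dotProduct_smul, dotProduct_smul, dotProduct_smul]
    have e1 : w ⬝ᵥ (GramL 3) *ᵥ deltaVec = 0 := hwdelta
    have e2 : deltaVec ⬝ᵥ (GramL 3) *ᵥ w = 0 := by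
      have hcomm := bil_comm deltaVec w
      unfold bil at hcomm
      rw [hcomm]
      exact hwdelta
    have e3 : deltaVec ⬝ᵥ (GramL 3) *ᵥ deltaVec = -4 := hdd
    rw [e1, e2, e3]
    simp only [smul_eq_mul]
    ring
  have hEw : Even (bil 3 w w) := even_quad (GramL 3) gramL3_symm gramL3_even_diag w
  obtain ⟨t, ht⟩ := hEw
  -- the bound from hr
  have hge : -3 * m^2 ≤ bil 3 D D := by
    have hm2 : (0:ℚ) < (m:ℚ)^2 := by positivity
    rw [le_div_iff₀ hm2] at hr
    exact_mod_cast hr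
  -- case on m
  have hmle : m ≤ 4 := Int.le_of_dvd (by norm_num) hm4
  interval_cases m
  · -- m = 1
    have hED : Even (bil 3 D D) := even_quad (GramL 3) gramL3_symm gramL3_even_diag D
    obtain ⟨s, hs⟩ := hED
    norm_num at hge
    omega
  · -- m = 2
    have hodd : ¬ (2 ∣ u) := by
      intro h2u
      have h2g : (2:ℤ) ∣ (Int.gcd 2 u : ℤ) := Int.dvd_coe_gcd (by norm_num) h2u
      rw [hgcd] at h2g
      norm_num at h2g
    obtain ⟨s, hs⟩ : Odd u := Int.odd_iff.2 (by omega)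
    obtain ⟨p, hp⟩ := Int.even_mul_succ_self s
    have hu2 : u^2 = 8*p + 1 := by
      rw [hs]
      linear_combination 4 * hp
    have key : bil 3 D D = 8*t - 32*p - 4 := by
      rw [hexpand, ht, hu2]
      ring
    norm_num at hge
    omega
  · -- m = 3 : contradiction
    exfalso
    have : ¬ ((3:ℤ) ∣ 4) := by decide
    exact this hm4
  · -- m = 4
    have hodd : ¬ (2 ∣ u) := by
      intro h2u
      have h2g : (2:ℤ) ∣ (Int.gcd 4 u : ℤ) := Int.dvd_coe_gcd (by norm_num) h2u
      rw [hgcd] at h2g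
      norm_num at h2g
    obtain ⟨s, hs⟩ : Odd u := Int.odd_iff.2 (by omega)
    obtain ⟨p, hp⟩ := Int.even_mul_succ_self s
    have hu2 : u^2 = 8*p + 1 := by
      rw [hs]
      linear_combination 4 * hp
    have key : bil 3 D D = 32*t - 32*p - 4 := by
      rw [hexpand, ht, hu2]
      ring
    norm_num at hge
    omega
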